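/- For positive integers n and m, write e(n) for the largest power of 2 dividing n. Then gcd(x^n + 1, x^m - 1) in Z[x] equals x^{gcd(n, m/2)} + 1 if e(m) ≥ 2·e(n), and equals 1 otherwise. -/

import Mathlib

open Polynomial

private lemma dvd_X_pow_gcd_sub_one (d : ℚ[X]) :
    ∀ a b : ℕ, d ∣ X ^ a - 1 → d ∣ X ^ b - 1 → d ∣ X ^ (Nat.gcd a b) - 1 := by
  intro a
  induction a using Nat.strong_induction_on with
  | _ a ih =>
    intro b h1 h2
    rcases Nat.eq_zero_or_pos a with ha | ha
    · subst ha; simpa using h2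
    · rw [Nat.gcd_rec]
      apply ih (b % a) (Nat.mod_lt _ ha)
      · have h3 : d ∣ X ^ (a * (b / a)) - 1 := by
          refine h1.trans ?_
          have := sub_dvd_pow_sub_pow ((X : ℚ[X]) ^ a) 1 (b / a)
          simpa [pow_mul] using this
        have key : (X : ℚ[X]) ^ b - 1 =
            X ^ (b % a) * (X ^ (a * (b / a)) - 1) + (X ^ (b % a) - 1) := by
          conv_lhs => rw [← Nat.div_add_mod b a]
          rw [pow_add]
          ring
        rw [key] at h2
        exact (dvd_add_right (h3.mul_left _)).mp h2
      · exact h1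

private lemma coprime_pow_add_sub (k : ℕ) :
    IsCoprime ((X : ℚ[X]) ^ k + 1) ((X : ℚ[X]) ^ k - 1) := by
  refine ⟨C (1/2), -C (1/2), ?_⟩
  have h2 : (C (1/2 : ℚ)) * 2 = 1 := by
    have : ((2 : ℚ[X])) = C (2 : ℚ) := (map_ofNat C 2).symm
    rw [this, ← C_mul, ← C_1]
    norm_num
  calc C (1/2) * ((X : ℚ[X]) ^ k + 1) + -C (1/2) * (X ^ k - 1)
      = C (1/2) * 2 := by ring
    _ = 1 := h2

theorem stmt_4 (n m : ℕ) (hn : 0 < n) (hm : 0 < m) :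
    gcd ((X : ℚ[X]) ^ n + 1) ((X : ℚ[X]) ^ m - 1) =
      if 2 * 2 ^ (n.factorization 2) ≤ 2 ^ (m.factorization 2) then
        (X : ℚ[X]) ^ (Nat.gcd n (m / 2)) + 1
      else 1 := by
  have hn0 : n ≠ 0 := hn.ne'
  have hm0 : m ≠ 0 := hm.ne'
  set a := n.factorization 2 with ha
  set b := m.factorization 2 with hb
  have hcond : (2 * 2 ^ a ≤ 2 ^ b) ↔ a + 1 ≤ b := by
    rw [← pow_succ']
    exact pow_le_pow_iff_right₀ one_lt_two
  have hp2n : ((X : ℚ[X]) ^ n + 1) ∣ X ^ (2 * n) - 1 := by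
    refine ⟨X ^ n - 1, ?_⟩
    rw [two_mul, pow_add]; ring
  have hd2n : gcd ((X : ℚ[X]) ^ n + 1) ((X : ℚ[X]) ^ m - 1) ∣ X ^ (2 * n) - 1 :=
    (gcd_dvd_left _ _).trans hp2n
  have hdG : gcd ((X : ℚ[X]) ^ n + 1) ((X : ℚ[X]) ^ m - 1) ∣ X ^ (Nat.gcd (2 * n) m) - 1 :=
    dvd_X_pow_gcd_sub_one _ _ _ hd2n (gcd_dvd_right _ _)
  split_ifs with h
  · -- case e(m) ≥ 2 e(n)
    have hab : a + 1 ≤ b := hcond.mp h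
    have h2m : 2 ∣ m := by
      rw [Nat.Prime.dvd_iff_one_le_factorization Nat.prime_two hm0]
      omega
    set m₂ := m / 2 with hm₂
    have hm2 : m = 2 * m₂ := by rw [hm₂, Nat.mul_div_cancel' h2m]
    have hm₂0 : m₂ ≠ 0 := by
      intro h0; rw [h0, mul_zero] at hm2; exact hm0 hm2
    set g := Nat.gcd n m₂ with hg
    have hg0 : g ≠ 0 := fun h0 => hn0 (Nat.eq_zero_of_gcd_eq_zero_left h0)
    -- factorization facts
    have hbeq : b = 1 + m₂.factorization 2 := by
      rw [hb, hm2, Nat.factorization_mul two_ne_zero hm₂0]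
      simp [Nat.prime_two.factorization]
    have hgfact : g.factorization 2 = a := by
      rw [hg, Nat.factorization_gcd hn0 hm₂0, Finsupp.inf_apply, ← ha]
      have hm2f : m₂.factorization 2 = b - 1 := by omega
      rw [hm2f]
      exact inf_eq_left.mpr (by omega)
    obtain ⟨k, hk⟩ := Nat.gcd_dvd_left n m₂
    rw [← hg] at hk
    have hk0 : k ≠ 0 := by rintro rfl; rw [mul_zero] at hk; exact hn0 hk
    have haeq : a = g.factorization 2 + k.factorization 2 := by
      rw [ha, hk, Nat.factorization_mul hg0 hk0]; simp
    have hkodd : Odd k := by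
      have hnd : ¬ (2 ∣ k) := by
        intro hdk
        have := (Nat.Prime.dvd_iff_one_le_factorization Nat.prime_two hk0).mp hdk
        omega
      rw [Nat.odd_iff]
      omega
    -- X^g + 1 divides both
    have hcp : ((X : ℚ[X]) ^ g + 1) ∣ X ^ n + 1 := by
      have h5 := Odd.add_dvd_pow_add_pow ((X : ℚ[X]) ^ g) 1 hkodd
      rw [← pow_mul, ← hk, one_pow] at h5
      exact h5
    have h2g : (2 * g) ∣ m := by
      rw [hm2]; exact mul_dvd_mul_left 2 (Nat.gcd_dvd_right n m₂)
    have hc2g : ((X : ℚ[X]) ^ g + 1) ∣ X ^ (2 * g) - 1 :=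
      ⟨X ^ g - 1, by rw [two_mul, pow_add]; ring⟩
    have hcq : ((X : ℚ[X]) ^ g + 1) ∣ X ^ m - 1 := by
      refine hc2g.trans ?_
      obtain ⟨t, ht⟩ := h2g
      have h5 := sub_dvd_pow_sub_pow ((X : ℚ[X]) ^ (2 * g)) 1 t
      rw [← pow_mul, ← ht, one_pow] at h5
      exact h5
    -- gcd divides X^g + 1
    have hGeq : Nat.gcd (2 * n) m = 2 * g := by
      conv_lhs => rw [hm2]
      rw [Nat.gcd_mul_left, hg]
    rw [hGeq] at hdG
    have hfac : (X : ℚ[X]) ^ (2 * g) - 1 = (X ^ g + 1) * (X ^ g - 1) := by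
      rw [two_mul, pow_add]; ring
    rw [hfac] at hdG
    have h6 : ((X : ℚ[X]) ^ g - 1) ∣ X ^ n - 1 := by
      have h7 := sub_dvd_pow_sub_pow ((X : ℚ[X]) ^ g) 1 k
      rw [← pow_mul, ← hk, one_pow] at h7
      exact h7
    have hcop : IsCoprime (gcd ((X : ℚ[X]) ^ n + 1) ((X : ℚ[X]) ^ m - 1)) ((X : ℚ[X]) ^ g - 1) :=
      ((coprime_pow_add_sub n).of_isCoprime_of_dvd_left (gcd_dvd_left _ _)).of_isCoprime_of_dvd_right h6
    have hdc : gcd ((X : ℚ[X]) ^ n + 1) ((X : ℚ[X]) ^ m - 1) ∣ (X : ℚ[X]) ^ g + 1 :=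
      hcop.dvd_of_dvd_mul_right hdG
    have hmonic : ((X : ℚ[X]) ^ g + 1).Monic := by
      have := monic_X_pow_add_C (1 : ℚ) hg0
      simpa using this
    calc gcd ((X : ℚ[X]) ^ n + 1) ((X : ℚ[X]) ^ m - 1)
        = normalize (gcd ((X : ℚ[X]) ^ n + 1) ((X : ℚ[X]) ^ m - 1)) := (normalize_gcd _ _).symm
      _ = normalize ((X : ℚ[X]) ^ g + 1) := normalize_eq_normalize hdc (dvd_gcd hcp hcq)
      _ = (X : ℚ[X]) ^ g + 1 := hmonic.normalize_eq_self
  · -- case otherwise: gcd(2n, m) divides n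
    have hab : b ≤ a := by omega
    have hGn : Nat.gcd (2 * n) m ∣ n := by
      rw [← Nat.factorization_le_iff_dvd (Nat.gcd_ne_zero_right hm0) hn0,
        Nat.factorization_gcd (by positivity) hm0, Finsupp.le_def]
      intro p
      rw [Finsupp.inf_apply]
      rcases eq_or_ne p 2 with rfl | hp
      · rw [Nat.factorization_mul two_ne_zero hn0]
        simp only [Finsupp.coe_add, Pi.add_apply, Nat.prime_two.factorization,
          Finsupp.single_eq_same]
        omega
      · rw [Nat.factorization_mul two_ne_zero hn0]
        simp only [Finsupp.coe_add, Pi.add_apply, Nat.prime_two.factorization,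
          Finsupp.single_eq_of_ne' (Ne.symm hp)]
        omega
    have hdn : gcd ((X : ℚ[X]) ^ n + 1) ((X : ℚ[X]) ^ m - 1) ∣ (X : ℚ[X]) ^ n - 1 := by
      refine hdG.trans ?_
      obtain ⟨c, hc⟩ := hGn
      have h5 := sub_dvd_pow_sub_pow ((X : ℚ[X]) ^ (Nat.gcd (2 * n) m)) 1 c
      rw [← pow_mul, ← hc, one_pow] at h5
      exact h5
    have hu : IsUnit (gcd ((X : ℚ[X]) ^ n + 1) ((X : ℚ[X]) ^ m - 1)) :=
      (coprime_pow_add_sub n).isUnit_of_dvd' (gcd_dvd_left _ _) hdn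
    rw [← normalize_gcd, normalize_eq_one]
    exact hu
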